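/- Let ψ : ℝ^{α+2} → ℝ and φ : ℝ^{β+2} → ℝ be c-Lipschitz for the sup metric, t > 1, M ≥ 1, and let f¹, f² both be (t,M)-close to ψ and g¹, g² both be (t,M)-close to φ. For l = 1, 2 let (F^l(i,j), G^l(i,j)) be the rational state system for (f^l, g^l) with positive initial data (z_i)_i, (w^j)_j. Suppose positive double sequences (z(i,j)), (w(i,j)) satisfy z(i,0) = z_i, w(0,j) = w^j and the dynamical inequalities f¹(w(i,j), z(i,j), …, z(i+α,j)) ≤ z(i,j+1) ≤ f²(w(i,j), z(i,j), …, z(i+α,j)) and g¹(w(i,j), z(i,j), …, z(i+β,j)) ≤ w(i+1,j) ≤ g²(w(i,j), z(i,j), …, z(i+β,j)) for all i, j. Then for l = 1, 2 and all i, j: max(F^l(i,j+1)/z(i,j+1), z(i,j+1)/F^l(i,j+1)) ≤ M^{2·P_{i+j(γ+1)}(c)} and max(G^l(i+1,j)/w(i+1,j), w(i+1,j)/G^l(i+1,j)) ≤ M^{2·P_{i+j(γ+1)}(c)}. -/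
import Mathlib

/-- Convert a log-distance bound into a ratio bound. -/
lemma st10_ratio (t M P : ℝ) (ht : 1 < t) (hM : 1 ≤ M) (a b : ℝ) (ha : 0 < a) (hb : 0 < b)
    (h : |Real.log a / Real.log t - Real.log b / Real.log t| ≤ 2 * P * (Real.log M / Real.log t)) :
    max (a / b) (b / a) ≤ M ^ (2 * P) := by
  have hlt : 0 < Real.log t := Real.log_pos ht
  have hM0 : (0:ℝ) < M := lt_of_lt_of_le one_pos hM
  have h0 : |Real.log a / Real.log t - Real.log b / Real.log t|
      = |Real.log a - Real.log b| / Real.log t := by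
    rw [div_sub_div_same, abs_div, abs_of_pos hlt]
  rw [h0] at h
  have h' : |Real.log a - Real.log b| ≤ 2 * P * Real.log M := by
    have h2 := mul_le_mul_of_nonneg_right h hlt.le
    rw [div_mul_cancel₀ _ hlt.ne'] at h2
    calc |Real.log a - Real.log b| ≤ 2 * P * (Real.log M / Real.log t) * Real.log t := h2
      _ = 2 * P * Real.log M := by field_simp
  have habs := abs_le.mp h'
  have e1 : a / b = Real.exp (Real.log a - Real.log b) := by
    rw [Real.exp_sub, Real.exp_log ha, Real.exp_log hb]
  have e2 : b / a = Real.exp (Real.log b - Real.log a) := by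
    rw [Real.exp_sub, Real.exp_log hb, Real.exp_log ha]
  have e3 : M ^ (2 * P) = Real.exp (2 * P * Real.log M) := by
    rw [Real.rpow_def_of_pos hM0, mul_comm]
  refine max_le ?_ ?_
  · rw [e1, e3]
    exact Real.exp_le_exp.mpr habs.2
  · rw [e2, e3]
    apply Real.exp_le_exp.mpr
    linarith [habs.1]

/-- One-step estimate: if `x` lies between `f1 v1` and `f2 v1`, both `(t,M)`-close to `ψ`,
and `fl` is also `(t,M)`-close to `ψ`, then the log-distance between `x` and `fl v2` is
controlled by `2μ + c·d` where `d` bounds the coordinatewise log-distances. -/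
lemma st10_step {N : ℕ} (c t M : ℝ) (hc : 0 ≤ c) (ht : 1 < t)
    (ψ : (Fin N → ℝ) → ℝ)
    (hψ : ∀ v w : Fin N → ℝ, |ψ v - ψ w| ≤ c * dist v w)
    (f1 f2 fl : (Fin N → ℝ) → ℝ)
    (hf1pos : ∀ v : Fin N → ℝ, (∀ k, 0 < v k) → 0 < f1 v)
    (hf1 : ∀ v : Fin N → ℝ, (∀ k, 0 < v k) →
      |Real.log (f1 v) / Real.log t - ψ (fun k => Real.log (v k) / Real.log t)|
        ≤ Real.log M / Real.log t)
    (hf2 : ∀ v : Fin N → ℝ, (∀ k, 0 < v k) →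
      |Real.log (f2 v) / Real.log t - ψ (fun k => Real.log (v k) / Real.log t)|
        ≤ Real.log M / Real.log t)
    (hfl : ∀ v : Fin N → ℝ, (∀ k, 0 < v k) →
      |Real.log (fl v) / Real.log t - ψ (fun k => Real.log (v k) / Real.log t)|
        ≤ Real.log M / Real.log t)
    (v1 v2 : Fin N → ℝ) (hv1 : ∀ k, 0 < v1 k) (hv2 : ∀ k, 0 < v2 k)
    (x : ℝ) (hx0 : 0 < x) (hx1 : f1 v1 ≤ x) (hx2 : x ≤ f2 v1)
    (d : ℝ) (hd : 0 ≤ d)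
    (hdist : ∀ k, |Real.log (v1 k) / Real.log t - Real.log (v2 k) / Real.log t| ≤ d) :
    |Real.log x / Real.log t - Real.log (fl v2) / Real.log t|
      ≤ 2 * (Real.log M / Real.log t) + c * d := by
  have hlt : 0 < Real.log t := Real.log_pos ht
  have h1 := abs_le.mp (hf1 v1 hv1)
  have h2 := abs_le.mp (hf2 v1 hv1)
  have hl := abs_le.mp (hfl v2 hv2)
  have hx1' : Real.log (f1 v1) / Real.log t ≤ Real.log x / Real.log t :=
    div_le_div_of_nonneg_right (Real.log_le_log (hf1pos v1 hv1) hx1) hlt.le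
  have hx2' : Real.log x / Real.log t ≤ Real.log (f2 v1) / Real.log t :=
    div_le_div_of_nonneg_right (Real.log_le_log hx0 hx2) hlt.le
  have hdv : dist (fun k => Real.log (v1 k) / Real.log t)
      (fun k => Real.log (v2 k) / Real.log t) ≤ d :=
    (dist_pi_le_iff hd).mpr fun k => by rw [Real.dist_eq]; exact hdist k
  have hψd : |ψ (fun k => Real.log (v1 k) / Real.log t)
      - ψ (fun k => Real.log (v2 k) / Real.log t)| ≤ c * d :=
    le_trans (hψ _ _) (mul_le_mul_of_nonneg_left hdv hc)
  have hψd' := abs_le.mp hψd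
  rw [abs_le]
  constructor <;> linarith

/-- Positivity of a rational state system. -/
lemma st10_pos {α β : ℕ} (f : (Fin (α + 2) → ℝ) → ℝ) (g : (Fin (β + 2) → ℝ) → ℝ)
    (hf : ∀ v : Fin (α + 2) → ℝ, (∀ k, 0 < v k) → 0 < f v)
    (hg : ∀ v : Fin (β + 2) → ℝ, (∀ k, 0 < v k) → 0 < g v)
    (z0 w0 : ℕ → ℝ) (hz0 : ∀ i, 0 < z0 i) (hw0 : ∀ j, 0 < w0 j)
    (F G : ℕ → ℕ → ℝ) (hF0 : ∀ i, F i 0 = z0 i) (hG0 : ∀ j, G 0 j = w0 j)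
    (hF : ∀ i j, F i (j + 1) = f (Fin.cons (G i j) (fun k : Fin (α + 1) => F (i + (k : ℕ)) j)))
    (hG : ∀ i j, G (i + 1) j = g (Fin.cons (G i j) (fun k : Fin (β + 1) => F (i + (k : ℕ)) j))) :
    ∀ j i, 0 < F i j ∧ 0 < G i j := by
  intro j
  induction j with
  | zero =>
    have hFz : ∀ i, 0 < F i 0 := fun i => (hF0 i) ▸ hz0 i
    have hGz : ∀ i, 0 < G i 0 := by
      intro i
      induction i with
      | zero => rw [hG0]; exact hw0 0
      | succ i ih =>
        rw [hG]
        apply hg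
        intro k
        refine Fin.cases ?_ ?_ k
        · simpa using ih
        · intro k'; simpa using hFz _
    exact fun i => ⟨hFz i, hGz i⟩
  | succ j ih =>
    have hFs : ∀ i, 0 < F i (j + 1) := by
      intro i
      rw [hF]
      apply hf
      intro k
      refine Fin.cases ?_ ?_ k
      · simpa using (ih i).2
      · intro k'; simpa using (ih _).1
    have hGs : ∀ i, 0 < G i (j + 1) := by
      intro i
      induction i with
      | zero => rw [hG0]; exact hw0 _
      | succ i ih' =>
        rw [hG]
        apply hg
        intro k
        refine Fin.cases ?_ ?_ k
        · simpa using ih'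
        · intro k'; simpa using hFs _
    exact fun i => ⟨hFs i, hGs i⟩

/-- dynamical inequalities. If positive sequences `(z, w)` satisfy the
dynamical inequalities between `(f¹, g¹)` and `(f², g²)` — all `(t,M)`-close to the same
`c`-Lipschitz pair `(ψ, φ)` — with the same initial data as the genuine rational state
systems `(F^l, G^l)`, then all ratios are bounded by `M^{2 P_{i+j(γ+1)}(c)}`. -/
theorem statement10 (α β : ℕ) (c t M : ℝ) (hc : 0 ≤ c) (ht : 1 < t) (hM : 1 ≤ M)
    (ψ : (Fin (α + 2) → ℝ) → ℝ) (φ : (Fin (β + 2) → ℝ) → ℝ)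
    (hψ : ∀ v w : Fin (α + 2) → ℝ, |ψ v - ψ w| ≤ c * dist v w)
    (hφ : ∀ v w : Fin (β + 2) → ℝ, |φ v - φ w| ≤ c * dist v w)
    (f1 f2 : (Fin (α + 2) → ℝ) → ℝ) (g1 g2 : (Fin (β + 2) → ℝ) → ℝ)
    (hf1pos : ∀ v : Fin (α + 2) → ℝ, (∀ k, 0 < v k) → 0 < f1 v)
    (hf2pos : ∀ v : Fin (α + 2) → ℝ, (∀ k, 0 < v k) → 0 < f2 v)
    (hg1pos : ∀ v : Fin (β + 2) → ℝ, (∀ k, 0 < v k) → 0 < g1 v)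
    (hg2pos : ∀ v : Fin (β + 2) → ℝ, (∀ k, 0 < v k) → 0 < g2 v)
    (hf1 : ∀ v : Fin (α + 2) → ℝ, (∀ k, 0 < v k) →
      |Real.log (f1 v) / Real.log t - ψ (fun k => Real.log (v k) / Real.log t)|
        ≤ Real.log M / Real.log t)
    (hf2 : ∀ v : Fin (α + 2) → ℝ, (∀ k, 0 < v k) →
      |Real.log (f2 v) / Real.log t - ψ (fun k => Real.log (v k) / Real.log t)|
        ≤ Real.log M / Real.log t)
    (hg1 : ∀ v : Fin (β + 2) → ℝ, (∀ k, 0 < v k) →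
      |Real.log (g1 v) / Real.log t - φ (fun k => Real.log (v k) / Real.log t)|
        ≤ Real.log M / Real.log t)
    (hg2 : ∀ v : Fin (β + 2) → ℝ, (∀ k, 0 < v k) →
      |Real.log (g2 v) / Real.log t - φ (fun k => Real.log (v k) / Real.log t)|
        ≤ Real.log M / Real.log t)
    (z0 w0 : ℕ → ℝ) (hz0 : ∀ i, 0 < z0 i) (hw0 : ∀ j, 0 < w0 j)
    (F1 G1 F2 G2 : ℕ → ℕ → ℝ)
    (hF10 : ∀ i, F1 i 0 = z0 i) (hG10 : ∀ j, G1 0 j = w0 j)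
    (hF1 : ∀ i j, F1 i (j + 1) = f1 (Fin.cons (G1 i j) (fun k : Fin (α + 1) => F1 (i + (k : ℕ)) j)))
    (hG1 : ∀ i j, G1 (i + 1) j = g1 (Fin.cons (G1 i j) (fun k : Fin (β + 1) => F1 (i + (k : ℕ)) j)))
    (hF20 : ∀ i, F2 i 0 = z0 i) (hG20 : ∀ j, G2 0 j = w0 j)
    (hF2 : ∀ i j, F2 i (j + 1) = f2 (Fin.cons (G2 i j) (fun k : Fin (α + 1) => F2 (i + (k : ℕ)) j)))
    (hG2 : ∀ i j, G2 (i + 1) j = g2 (Fin.cons (G2 i j) (fun k : Fin (β + 1) => F2 (i + (k : ℕ)) j)))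
    (z w : ℕ → ℕ → ℝ) (hzpos : ∀ i j, 0 < z i j) (hwpos : ∀ i j, 0 < w i j)
    (hz0' : ∀ i, z i 0 = z0 i) (hw0' : ∀ j, w 0 j = w0 j)
    (hzlow : ∀ i j, f1 (Fin.cons (w i j) (fun k : Fin (α + 1) => z (i + (k : ℕ)) j)) ≤ z i (j + 1))
    (hzhigh : ∀ i j, z i (j + 1) ≤ f2 (Fin.cons (w i j) (fun k : Fin (α + 1) => z (i + (k : ℕ)) j)))
    (hwlow : ∀ i j, g1 (Fin.cons (w i j) (fun k : Fin (β + 1) => z (i + (k : ℕ)) j)) ≤ w (i + 1) j)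
    (hwhigh : ∀ i j, w (i + 1) j ≤ g2 (Fin.cons (w i j) (fun k : Fin (β + 1) => z (i + (k : ℕ)) j))) :
    ∀ i j : ℕ,
      max (F1 i (j + 1) / z i (j + 1)) (z i (j + 1) / F1 i (j + 1))
        ≤ M ^ (2 * ∑ k ∈ Finset.range (i + j * (max α β + 1) + 1), c ^ k) ∧
      max (F2 i (j + 1) / z i (j + 1)) (z i (j + 1) / F2 i (j + 1))
        ≤ M ^ (2 * ∑ k ∈ Finset.range (i + j * (max α β + 1) + 1), c ^ k) ∧
      max (G1 (i + 1) j / w (i + 1) j) (w (i + 1) j / G1 (i + 1) j)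
        ≤ M ^ (2 * ∑ k ∈ Finset.range (i + j * (max α β + 1) + 1), c ^ k) ∧
      max (G2 (i + 1) j / w (i + 1) j) (w (i + 1) j / G2 (i + 1) j)
        ≤ M ^ (2 * ∑ k ∈ Finset.range (i + j * (max α β + 1) + 1), c ^ k) := by
  have hlt : 0 < Real.log t := Real.log_pos ht
  have hmu : 0 ≤ Real.log M / Real.log t := div_nonneg (Real.log_nonneg hM) hlt.le
  have pos1 := st10_pos f1 g1 hf1pos hg1pos z0 w0 hz0 hw0 F1 G1 hF10 hG10 hF1 hG1
  have pos2 := st10_pos f2 g2 hf2pos hg2pos z0 w0 hz0 hw0 F2 G2 hF20 hG20 hF2 hG2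
  have hP : ∀ n : ℕ, 0 ≤ ∑ k ∈ Finset.range (n + 1), c ^ k := fun n =>
    Finset.sum_nonneg fun k _ => pow_nonneg hc k
  have key : ∀ n : ℕ, ∀ i j : ℕ, i + j * (max α β + 1) ≤ n →
      (|Real.log (z i (j+1)) / Real.log t - Real.log (F1 i (j+1)) / Real.log t|
        ≤ 2 * (∑ k ∈ Finset.range (n + 1), c ^ k) * (Real.log M / Real.log t)) ∧
      (|Real.log (z i (j+1)) / Real.log t - Real.log (F2 i (j+1)) / Real.log t|
        ≤ 2 * (∑ k ∈ Finset.range (n + 1), c ^ k) * (Real.log M / Real.log t)) ∧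
      (|Real.log (w (i+1) j) / Real.log t - Real.log (G1 (i+1) j) / Real.log t|
        ≤ 2 * (∑ k ∈ Finset.range (n + 1), c ^ k) * (Real.log M / Real.log t)) ∧
      (|Real.log (w (i+1) j) / Real.log t - Real.log (G2 (i+1) j) / Real.log t|
        ≤ 2 * (∑ k ∈ Finset.range (n + 1), c ^ k) * (Real.log M / Real.log t)) := by
    intro n
    induction n using Nat.strong_induction_on with
    | _ n IH =>
    intro i j hij
    obtain ⟨d, hd0, hdB, hwd1, hwd2, hzd⟩ :
        ∃ d : ℝ, 0 ≤ d ∧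
          2 * (Real.log M / Real.log t) + c * d
            ≤ 2 * (∑ k ∈ Finset.range (n + 1), c ^ k) * (Real.log M / Real.log t) ∧
          |Real.log (w i j) / Real.log t - Real.log (G1 i j) / Real.log t| ≤ d ∧
          |Real.log (w i j) / Real.log t - Real.log (G2 i j) / Real.log t| ≤ d ∧
          ∀ k : ℕ, k ≤ max α β →
            (|Real.log (z (i+k) j) / Real.log t - Real.log (F1 (i+k) j) / Real.log t| ≤ d) ∧
            (|Real.log (z (i+k) j) / Real.log t - Real.log (F2 (i+k) j) / Real.log t| ≤ d) := by
      rcases n with _ | m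
      · -- base case: i = 0, j = 0
        obtain ⟨hi0, hjx⟩ := Nat.add_eq_zero.mp (Nat.le_zero.mp hij)
        have hj0 : j = 0 := by
          rcases Nat.mul_eq_zero.mp hjx with h | h
          · exact h
          · exact absurd h (Nat.succ_ne_zero _)
        subst hi0; subst hj0
        refine ⟨0, le_refl 0, ?_, ?_, ?_, ?_⟩
        · norm_num [Finset.sum_range_one]
        · have e : w 0 0 = G1 0 0 := by rw [hw0', hG10]
          rw [e, sub_self, abs_zero]
        · have e : w 0 0 = G2 0 0 := by rw [hw0', hG20]
          rw [e, sub_self, abs_zero]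
        · intro k _
          constructor
          · have e : z (0+k) 0 = F1 (0+k) 0 := by rw [hz0', hF10]
            rw [e, sub_self, abs_zero]
          · have e : z (0+k) 0 = F2 (0+k) 0 := by rw [hz0', hF20]
            rw [e, sub_self, abs_zero]
      · -- inductive case
        have harith1 : ∀ a b n : ℕ, a + 1 + b ≤ n + 1 → a + b ≤ n := fun a b n h => by omega
        have harith2 : ∀ i k jq g m : ℕ, i + (jq + (g+1)) ≤ m + 1 → k ≤ g →
            (i + k) + jq ≤ m := fun i k jq g m h1 h2 => by omega
        have hd0' : 0 ≤ 2 * (∑ k ∈ Finset.range (m + 1), c ^ k) * (Real.log M / Real.log t) :=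
          mul_nonneg (mul_nonneg (by norm_num) (hP m)) hmu
        refine ⟨2 * (∑ k ∈ Finset.range (m + 1), c ^ k) * (Real.log M / Real.log t),
          hd0', ?_, ?_, ?_, ?_⟩
        · conv_rhs => rw [geom_sum_succ]
          apply le_of_eq
          ring
        · rcases i with _ | i'
          · have e : w 0 j = G1 0 j := by rw [hw0', hG10]
            rw [e, sub_self, abs_zero]; exact hd0'
          · exact (IH m (Nat.lt_succ_self m) i' j (harith1 _ _ _ hij)).2.2.1
        · rcases i with _ | i'
          · have e : w 0 j = G2 0 j := by rw [hw0', hG20]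
            rw [e, sub_self, abs_zero]; exact hd0'
          · exact (IH m (Nat.lt_succ_self m) i' j (harith1 _ _ _ hij)).2.2.2
        · intro k hk
          rcases j with _ | j'
          · constructor
            · have e : z (i+k) 0 = F1 (i+k) 0 := by rw [hz0', hF10]
              rw [e, sub_self, abs_zero]; exact hd0'
            · have e : z (i+k) 0 = F2 (i+k) 0 := by rw [hz0', hF20]
              rw [e, sub_self, abs_zero]; exact hd0'
          · rw [Nat.succ_mul] at hij
            have hm := IH m (Nat.lt_succ_self m) (i + k) j' (harith2 _ _ _ _ _ hij hk)
            exact ⟨hm.1, hm.2.1⟩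
    -- positivity of the vectors
    have hv1α : ∀ k, 0 < (Fin.cons (w i j) (fun k : Fin (α+1) => z (i+(k:ℕ)) j) : Fin (α+2) → ℝ) k := by
      intro k; refine Fin.cases ?_ ?_ k
      · simpa using hwpos i j
      · intro k'; simpa using hzpos _ _
    have hv1β : ∀ k, 0 < (Fin.cons (w i j) (fun k : Fin (β+1) => z (i+(k:ℕ)) j) : Fin (β+2) → ℝ) k := by
      intro k; refine Fin.cases ?_ ?_ k
      · simpa using hwpos i j
      · intro k'; simpa using hzpos _ _
    have hvF1 : ∀ k, 0 < (Fin.cons (G1 i j) (fun k : Fin (α+1) => F1 (i+(k:ℕ)) j) : Fin (α+2) → ℝ) k := by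
      intro k; refine Fin.cases ?_ ?_ k
      · simpa using (pos1 j i).2
      · intro k'; simpa using (pos1 j _).1
    have hvF2 : ∀ k, 0 < (Fin.cons (G2 i j) (fun k : Fin (α+1) => F2 (i+(k:ℕ)) j) : Fin (α+2) → ℝ) k := by
      intro k; refine Fin.cases ?_ ?_ k
      · simpa using (pos2 j i).2
      · intro k'; simpa using (pos2 j _).1
    have hvG1 : ∀ k, 0 < (Fin.cons (G1 i j) (fun k : Fin (β+1) => F1 (i+(k:ℕ)) j) : Fin (β+2) → ℝ) k := by
      intro k; refine Fin.cases ?_ ?_ k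
      · simpa using (pos1 j i).2
      · intro k'; simpa using (pos1 j _).1
    have hvG2 : ∀ k, 0 < (Fin.cons (G2 i j) (fun k : Fin (β+1) => F2 (i+(k:ℕ)) j) : Fin (β+2) → ℝ) k := by
      intro k; refine Fin.cases ?_ ?_ k
      · simpa using (pos2 j i).2
      · intro k'; simpa using (pos2 j _).1
    -- distance bounds on the vectors
    have hdF1 : ∀ k : Fin (α+2),
        |Real.log ((Fin.cons (w i j) (fun k : Fin (α+1) => z (i+(k:ℕ)) j) : Fin (α+2) → ℝ) k) / Real.log t
          - Real.log ((Fin.cons (G1 i j) (fun k : Fin (α+1) => F1 (i+(k:ℕ)) j) : Fin (α+2) → ℝ) k) / Real.log t|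
          ≤ d := by
      intro k; refine Fin.cases ?_ ?_ k
      · simpa using hwd1
      · intro k'
        simpa using (hzd (k' : ℕ) (le_trans (Fin.is_le k') (le_max_left α β))).1
    have hdF2 : ∀ k : Fin (α+2),
        |Real.log ((Fin.cons (w i j) (fun k : Fin (α+1) => z (i+(k:ℕ)) j) : Fin (α+2) → ℝ) k) / Real.log t
          - Real.log ((Fin.cons (G2 i j) (fun k : Fin (α+1) => F2 (i+(k:ℕ)) j) : Fin (α+2) → ℝ) k) / Real.log t|
          ≤ d := by
      intro k; refine Fin.cases ?_ ?_ k
      · simpa using hwd2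
      · intro k'
        simpa using (hzd (k' : ℕ) (le_trans (Fin.is_le k') (le_max_left α β))).2
    have hdG1 : ∀ k : Fin (β+2),
        |Real.log ((Fin.cons (w i j) (fun k : Fin (β+1) => z (i+(k:ℕ)) j) : Fin (β+2) → ℝ) k) / Real.log t
          - Real.log ((Fin.cons (G1 i j) (fun k : Fin (β+1) => F1 (i+(k:ℕ)) j) : Fin (β+2) → ℝ) k) / Real.log t|
          ≤ d := by
      intro k; refine Fin.cases ?_ ?_ k
      · simpa using hwd1
      · intro k'
        simpa using (hzd (k' : ℕ) (le_trans (Fin.is_le k') (le_max_right α β))).1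
    have hdG2 : ∀ k : Fin (β+2),
        |Real.log ((Fin.cons (w i j) (fun k : Fin (β+1) => z (i+(k:ℕ)) j) : Fin (β+2) → ℝ) k) / Real.log t
          - Real.log ((Fin.cons (G2 i j) (fun k : Fin (β+1) => F2 (i+(k:ℕ)) j) : Fin (β+2) → ℝ) k) / Real.log t|
          ≤ d := by
      intro k; refine Fin.cases ?_ ?_ k
      · simpa using hwd2
      · intro k'
        simpa using (hzd (k' : ℕ) (le_trans (Fin.is_le k') (le_max_right α β))).2
    refine ⟨?_, ?_, ?_, ?_⟩
    · rw [hF1 i j]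
      exact le_trans (st10_step c t M hc ht ψ hψ f1 f2 f1 hf1pos hf1 hf2 hf1
        _ _ hv1α hvF1 (z i (j+1)) (hzpos i (j+1)) (hzlow i j) (hzhigh i j) d hd0 hdF1) hdB
    · rw [hF2 i j]
      exact le_trans (st10_step c t M hc ht ψ hψ f1 f2 f2 hf1pos hf1 hf2 hf2
        _ _ hv1α hvF2 (z i (j+1)) (hzpos i (j+1)) (hzlow i j) (hzhigh i j) d hd0 hdF2) hdB
    · rw [hG1 i j]
      exact le_trans (st10_step c t M hc ht φ hφ g1 g2 g1 hg1pos hg1 hg2 hg1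
        _ _ hv1β hvG1 (w (i+1) j) (hwpos (i+1) j) (hwlow i j) (hwhigh i j) d hd0 hdG1) hdB
    · rw [hG2 i j]
      exact le_trans (st10_step c t M hc ht φ hφ g1 g2 g2 hg1pos hg1 hg2 hg2
        _ _ hv1β hvG2 (w (i+1) j) (hwpos (i+1) j) (hwlow i j) (hwhigh i j) d hd0 hdG2) hdB
  intro i j
  obtain ⟨k1, k2, k3, k4⟩ := key (i + j * (max α β + 1)) i j le_rfl
  refine ⟨?_, ?_, ?_, ?_⟩
  · exact st10_ratio t M _ ht hM (F1 i (j+1)) (z i (j+1)) (pos1 (j+1) i).1 (hzpos _ _)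
      (by rw [abs_sub_comm]; exact k1)
  · exact st10_ratio t M _ ht hM (F2 i (j+1)) (z i (j+1)) (pos2 (j+1) i).1 (hzpos _ _)
      (by rw [abs_sub_comm]; exact k2)
  · exact st10_ratio t M _ ht hM (G1 (i+1) j) (w (i+1) j) (pos1 j (i+1)).2 (hwpos _ _)
      (by rw [abs_sub_comm]; exact k3)
  · exact st10_ratio t M _ ht hM (G2 (i+1) j) (w (i+1) j) (pos2 j (i+1)).2 (hwpos _ _)
      (by rw [abs_sub_comm]; exact k4)
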